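/- Consider the decomposed singular system consisting of the forward subsystem Y^p_{k+1} = J Y^p_k + B_p V_k (state dimension p) and the backward subsystem H Y^q_{k+1} = Y^q_k + B_q V_k (state dimension q, H nilpotent with index q*), both driven by the same input V_k ∈ F^m. Then the set of states (Y^p_k, Y^q_k) ∈ F^p × F^q reachable from zero initial condition Y^p_0 = 0 equals the direct sum S_p(J, B_p) ⊕ S_{q*}(H, B_q), where S_p(J,B_p) = span of columns of [B_p, J B_p, ..., J^{p-1} B_p] embedded in the first component and S_{q*}(H,B_q) = span of columns of [B_q, H B_q, ..., H^{q*-1} B_q] embedded in the second component. -/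

import Mathlib

open Matrix Finset

/-- The column span of the Krylov block matrix `[B, JB, ..., J^{k-1}B]`. -/
def krylovSpan {F : Type*} [Field F] {p m : ℕ}
    (J : Matrix (Fin p) (Fin p) F) (B : Matrix (Fin p) (Fin m) F) (k : ℕ) :
    Submodule F (Fin p → F) :=
  Submodule.span F {w | ∃ i < k, ∃ j : Fin m, w = (J ^ i * B) *ᵥ Pi.single j 1}

lemma krylov_term_mem {F : Type*} [Field F] {p m : ℕ}
    (J : Matrix (Fin p) (Fin p) F) (B : Matrix (Fin p) (Fin m) F) {k i : ℕ}
    (hi : i < k) (v : Fin m → F) : (J ^ i * B) *ᵥ v ∈ krylovSpan J B k := by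
  have hv : v = ∑ j : Fin m, v j • (Pi.single j 1 : Fin m → F) := by
    funext x
    simp [Pi.single_apply, Finset.sum_apply, eq_comm]
  rw [← (J ^ i * B).mulVecLin_apply, hv, map_sum]
  refine Submodule.sum_mem _ fun j _ => ?_
  rw [_root_.map_smul]
  exact Submodule.smul_mem _ _
    (Submodule.subset_span ⟨i, hi, j, ((J ^ i * B).mulVecLin_apply _).symm ▸ rfl⟩)

lemma single_input_sum {F : Type*} [Field F] {p m k : ℕ} (J : Matrix (Fin p) (Fin p) F)
    (B : Matrix (Fin p) (Fin m) F) (i : ℕ) (hi : i < k) (j : Fin m) :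
    ∑ b ∈ Finset.range k, (J ^ b * B) *ᵥ (if b = i then (Pi.single j 1 : Fin m → F) else 0)
      = (J ^ i * B) *ᵥ Pi.single j 1 := by
  have hz : ∀ b ∈ Finset.range k, b ≠ i →
      (J ^ b * B) *ᵥ (if b = i then (Pi.single j 1 : Fin m → F) else 0) = 0 :=
    fun b _ hb => by rw [if_neg hb, Matrix.mulVec_zero]
  exact (Finset.sum_eq_single_of_mem i (Finset.mem_range.mpr hi) hz).trans
    (by rw [if_pos rfl])

lemma krylov_rep {F : Type*} [Field F] {p m : ℕ}
    (J : Matrix (Fin p) (Fin p) F) (B : Matrix (Fin p) (Fin m) F) (k : ℕ)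
    {x : Fin p → F} (hx : x ∈ krylovSpan J B k) :
    ∃ u : ℕ → Fin m → F, x = ∑ i ∈ Finset.range k, (J ^ i * B) *ᵥ u i := by
  let L : (ℕ → Fin m → F) →ₗ[F] (Fin p → F) :=
    ∑ i ∈ Finset.range k, ((J ^ i * B).mulVecLin).comp (LinearMap.proj i)
  have hL : ∀ u, L u = ∑ i ∈ Finset.range k, (J ^ i * B) *ᵥ u i := by
    intro u
    simp [L, LinearMap.sum_apply, mulVecLin_apply]
  have hx' : x ∈ LinearMap.range L := by
    refine Submodule.span_le.mpr ?_ hx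
    rintro w ⟨i, hi, j, rfl⟩
    refine LinearMap.mem_range.mpr ⟨fun n => if n = i then Pi.single j 1 else 0, ?_⟩
    rw [hL]
    exact single_input_sum J B i hi j
  obtain ⟨u, hu⟩ := hx'
  exact ⟨u, by rw [← hu, hL]⟩

lemma my_sum_mulVec {F : Type*} [Field F] {a b : ℕ} {ι : Type*} (s : Finset ι)
    (f : ι → Matrix (Fin a) (Fin b) F) (v : Fin b → F) :
    (∑ i ∈ s, f i) *ᵥ v = ∑ i ∈ s, f i *ᵥ v := by
  funext x
  simp only [Matrix.mulVec, dotProduct, Finset.sum_apply, Matrix.sum_apply,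
    Finset.sum_mul]
  rw [Finset.sum_comm]

lemma krylov_pow_mem {F : Type*} [Field F] {p m : ℕ}
    (J : Matrix (Fin p) (Fin p) F) (B : Matrix (Fin p) (Fin m) F)
    (n : ℕ) (v : Fin m → F) : (J ^ n * B) *ᵥ v ∈ krylovSpan J B p := by
  rcases Nat.eq_zero_or_pos p with hp | hp
  · subst hp
    have : (J ^ n * B) *ᵥ v = 0 := Subsingleton.elim _ _
    rw [this]; exact Submodule.zero_mem _
  · have hmon : J.charpoly.Monic := J.charpoly_monic
    have hdeg : J.charpoly.natDegree = p := by
      rw [Matrix.charpoly_natDegree_eq_dim, Fintype.card_fin]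
    set r := (Polynomial.X ^ n : Polynomial F) %ₘ J.charpoly with hr
    have hJn : J ^ n = Polynomial.aeval J r := by
      have h1 : (Polynomial.X ^ n : Polynomial F) %ₘ J.charpoly
          + J.charpoly * (Polynomial.X ^ n /ₘ J.charpoly)
          = Polynomial.X ^ n := Polynomial.modByMonic_add_div _ _
      have h2 := congrArg (Polynomial.aeval J) h1
      rw [map_add, _root_.map_mul, Matrix.aeval_self_charpoly, zero_mul, add_zero,
        map_pow, Polynomial.aeval_X] at h2
      exact h2.symm
    have hrdeg : r.natDegree < p := by
      by_cases h0 : r = 0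
      · simpa [h0] using hp
      · rw [← hdeg]
        exact Polynomial.natDegree_lt_natDegree h0
          (Polynomial.degree_modByMonic_lt _ hmon)
    have haev : Polynomial.aeval J r = ∑ i ∈ Finset.range p, r.coeff i • J ^ i :=
      Polynomial.aeval_eq_sum_range' hrdeg J
    rw [hJn, haev]
    rw [Matrix.sum_mul, my_sum_mulVec]
    refine Submodule.sum_mem _ fun i hi => ?_
    rw [Matrix.smul_mul, Matrix.smul_mulVec]
    exact Submodule.smul_mem _ _ (krylov_term_mem J B (Finset.mem_range.mp hi) v)

/-- Reachability theorem for the decomposed singular system: the set of states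
`(Y^p_k, Y^q_k)` reachable from zero initial condition equals the direct sum
`S_p(J, B_p) ⊕ S_{q*}(H, B_q)`. -/
theorem reachable_set_decomposed {F : Type*} [Field F] {p q m : ℕ}
    (J : Matrix (Fin p) (Fin p) F) (H : Matrix (Fin q) (Fin q) F)
    (Bp : Matrix (Fin p) (Fin m) F) (Bq : Matrix (Fin q) (Fin m) F)
    (qs : ℕ) (hH : H ^ qs = 0) (hH' : H ^ (qs - 1) ≠ 0) :
    {W : (Fin p → F) × (Fin q → F) | ∃ k : ℕ, ∃ V : ℕ → Fin m → F,
        (∑ i ∈ Finset.range k, (J ^ (k - 1 - i)) *ᵥ (Bp *ᵥ V i),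
          -∑ i ∈ Finset.range qs, (H ^ i) *ᵥ (Bq *ᵥ V (k + i))) = W}
      = {W : (Fin p → F) × (Fin q → F) |
          W.1 ∈ krylovSpan J Bp p ∧ W.2 ∈ krylovSpan H Bq qs} := by
  ext W
  simp only [Set.mem_setOf_eq]
  constructor
  · rintro ⟨k, V, rfl⟩
    constructor
    · dsimp only
      refine Submodule.sum_mem _ fun i _ => ?_
      rw [Matrix.mulVec_mulVec]
      exact krylov_pow_mem J Bp _ _
    · dsimp only
      refine Submodule.neg_mem _ (Submodule.sum_mem _ fun i hi => ?_)
      rw [Matrix.mulVec_mulVec]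
      exact krylov_term_mem H Bq (Finset.mem_range.mp hi) _
  · rintro ⟨h1, h2⟩
    obtain ⟨u, hu⟩ := krylov_rep J Bp p h1
    obtain ⟨w, hw⟩ := krylov_rep H Bq qs h2
    refine ⟨p, fun i => if i < p then u (p - 1 - i) else -w (i - p), ?_⟩
    have hfst : ∑ i ∈ Finset.range p, (J ^ (p - 1 - i)) *ᵥ
        (Bp *ᵥ (if i < p then u (p - 1 - i) else -w (i - p))) = W.1 := by
      rw [hu]
      rw [← Finset.sum_range_reflect (fun i => (J ^ i * Bp) *ᵥ u i) p]
      refine Finset.sum_congr rfl fun i hi => ?_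
      rw [if_pos (Finset.mem_range.mp hi), Matrix.mulVec_mulVec]
    have hsnd : -∑ i ∈ Finset.range qs, (H ^ i) *ᵥ
        (Bq *ᵥ (if p + i < p then u (p - 1 - (p + i)) else -w (p + i - p))) = W.2 := by
      have key : ∀ i ∈ Finset.range qs, (H ^ i) *ᵥ
          (Bq *ᵥ (if p + i < p then u (p - 1 - (p + i)) else -w (p + i - p)))
          = -((H ^ i * Bq) *ᵥ w i) := by
        intro i hi
        rw [if_neg (by omega), Matrix.mulVec_mulVec]
        have h3 : p + i - p = i := by omega
        rw [h3, Matrix.mulVec_neg]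
      rw [Finset.sum_congr rfl key, Finset.sum_neg_distrib, neg_neg, hw]
    exact Prod.ext hfst hsnd
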